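/- Let $G$ be a group, $R$ a commutative ring with $G$-action, and $W$ an $R$-module with semilinear $G$-action. Let $\tau \in G$ and suppose $x \in W$ satisfies: $x$ is fixed by a subgroup $H$, and the orbit $\{\tau^n x\}$ is finite, so $\tau^{p^n} x = x$ for $n$ large. If $W$ is a $p$-adic Banach space and $\nabla_\tau(x) := \lim_{n \to \infty} \frac{\tau^{p^n}(x) - x}{p^n}$ exists, then $\nabla_\tau(x) = 0$. Conversely, if $x$ lies in the locally analytic vectors and $\nabla_\tau(x) = 0$ (equivalently $\log(\tau)(x) = 0$), then $\tau^{p^n}(x) = \exp(p^n \log \tau)(x) = x$ for $n$ sufficiently large, so the orbit of $x$ under the procyclic group generated by $\tau$ is finite. -/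
import Mathlib


/-- In a `p`-adic Banach space `W` with an operator `τ`:
(1) if `τ^{p^n} x = x` for all large `n` and the limit `∇_τ(x) = lim (τ^{p^n}x - x)/p^n`
exists, then that limit is `0`;
(2) conversely, if `x` is locally analytic in the sense that
`τ^{p^n} x = exp(p^n log τ)(x) = ∑_k (p^n)^k/k! · D^k x` (with `D = log τ`) for all `n`,
and `D x = 0`, then `τ^{p^n} x = x` for all large `n`. -/
theorem stmt13 (p : ℕ) [Fact p.Prime] (W : Type*) [NormedAddCommGroup W]
    [NormedSpace ℚ_[p] W] (τ : W → W) (D : Module.End ℚ_[p] W) (x : W) :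
    ((∃ N : ℕ, ∀ n ≥ N, τ^[p ^ n] x = x) →
      ∀ L : W, Filter.Tendsto (fun n : ℕ => ((p : ℚ_[p]) ^ n)⁻¹ • (τ^[p ^ n] x - x))
        Filter.atTop (nhds L) → L = 0) ∧
    ((∀ n : ℕ, HasSum
        (fun k : ℕ => ((Nat.factorial k : ℚ_[p]))⁻¹ • ((p : ℚ_[p]) ^ n) ^ k • (D ^ k) x)
        (τ^[p ^ n] x)) →
      D x = 0 → ∃ N : ℕ, ∀ n ≥ N, τ^[p ^ n] x = x) := by
  constructor
  · rintro ⟨N, hN⟩ L hL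
    have h0 : Filter.Tendsto (fun n : ℕ => ((p : ℚ_[p]) ^ n)⁻¹ • (τ^[p ^ n] x - x))
        Filter.atTop (nhds 0) := by
      apply Filter.Tendsto.congr' _ tendsto_const_nhds
      filter_upwards [Filter.eventually_ge_atTop N] with n hn
      simp [hN n hn]
    exact tendsto_nhds_unique hL h0
  · intro hsum hDx
    refine ⟨0, fun n _ => ?_⟩
    have hx : HasSum
        (fun k : ℕ => ((Nat.factorial k : ℚ_[p]))⁻¹ • ((p : ℚ_[p]) ^ n) ^ k • (D ^ k) x) x := by
      convert hasSum_ite_eq (0 : ℕ) x using 1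
      funext k
      rcases k with _ | k
      · simp
      · have : (D ^ (k + 1)) x = 0 := by
          rw [pow_succ]
          simp [hDx]
        simp [this]
    exact (hsum n).unique hx
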